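/- Let R be a nonempty finite index set and let N ⊆ R. For μ > 0, reals P_r, and reals D_r > 0 for r ∈ N, define the domain Ω = { d ∈ ℝ^R : 0 < d_r < D_r for r ∈ N, and 0 < d_r for r ∈ R∖N } and the function O(d) = Σ_{r∈R} P_r d_r − μ Σ_{r∈R} d_r ln d_r − μ Σ_{r∈N} (D_r − d_r) ln(D_r − d_r) − Σ_{r∈R} c_r d_r, where c_r ∈ ℝ are fixed linear coefficients (arising from Lagrange multipliers of the supply and need constraints). Then O is strictly concave on Ω and has at most one critical point in Ω; a point d* ∈ Ω is a critical point (equivalently, the unique global maximizer of O on Ω) if and only if d*_r = D_r·(1 − 1/(1 + e^{(P_r − c_r)/μ})) for r ∈ N and d*_r = e^{(P_r − c_r)/μ − 1} for r ∈ R∖N. -/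

import Mathlib

open Finset Set



lemma drm_aux_concave_nonmem (μ A : ℝ) (hμ : 0 < μ) :
    StrictConcaveOn ℝ (Ici (0:ℝ)) (fun x => A * x + μ * Real.negMulLog x) := by
  refine ⟨convex_Ici _, ?_⟩
  intro x hx y hy hxy a b ha hb hab
  have h1 := Real.strictConcaveOn_negMulLog.2 hx hy hxy ha hb hab
  simp only [smul_eq_mul] at *
  nlinarith [mul_lt_mul_of_pos_left h1 hμ]

lemma drm_aux_concave_mem (μ A Dr : ℝ) (hμ : 0 < μ) :
    StrictConcaveOn ℝ (Icc (0:ℝ) Dr)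
      (fun x => A * x + μ * Real.negMulLog x + μ * Real.negMulLog (Dr - x)) := by
  refine ⟨convex_Icc _ _, ?_⟩
  intro x hx y hy hxy a b ha hb hab
  have h1 := Real.strictConcaveOn_negMulLog.2 (mem_Ici.2 hx.1) (mem_Ici.2 hy.1) hxy ha hb hab
  have hx2 : Dr - x ∈ Ici (0:ℝ) := mem_Ici.2 (by linarith [hx.2])
  have hy2 : Dr - y ∈ Ici (0:ℝ) := mem_Ici.2 (by linarith [hy.2])
  have hne2 : Dr - x ≠ Dr - y := fun h => hxy (by linarith)
  have h2 := Real.strictConcaveOn_negMulLog.2 hx2 hy2 hne2 ha hb hab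
  simp only [smul_eq_mul] at *
  have harg : a * (Dr - x) + b * (Dr - y) = Dr - (a * x + b * y) := by linear_combination Dr * hab
  rw [harg] at h2
  nlinarith [mul_lt_mul_of_pos_left h1 hμ, mul_lt_mul_of_pos_left h2 hμ]

lemma drm_aux_deriv_nonmem (μ A x : ℝ) (hx : 0 < x) :
    HasDerivAt (fun x => A * x + μ * Real.negMulLog x) (A + μ * (-Real.log x - 1)) x := by
  have h1 : HasDerivAt (fun y : ℝ => A * y) A x := by
    simpa using (hasDerivAt_id x).const_mul A
  exact h1.add ((Real.hasDerivAt_negMulLog hx.ne').const_mul μ)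

lemma drm_aux_deriv_mem (μ A Dr x : ℝ) (hx : 0 < x) (hxD : x < Dr) :
    HasDerivAt (fun x => A * x + μ * Real.negMulLog x + μ * Real.negMulLog (Dr - x))
      (A + μ * (-Real.log x - 1) + μ * (Real.log (Dr - x) + 1)) x := by
  have h1 := drm_aux_deriv_nonmem μ A x hx
  have hinner : HasDerivAt (fun y : ℝ => Dr - y) (-1) x := by
    simpa using (hasDerivAt_id x).const_sub Dr
  have h2 : HasDerivAt (fun y : ℝ => Real.negMulLog (Dr - y))
      ((-Real.log (Dr - x) - 1) * (-1)) x :=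
    (Real.hasDerivAt_negMulLog (sub_pos.2 hxD).ne').comp x hinner
  have h3 := h1.add (h2.const_mul μ)
  rw [show A + μ * (-Real.log x - 1) + μ * (Real.log (Dr - x) + 1) =
      A + μ * (-Real.log x - 1) + μ * ((-Real.log (Dr - x) - 1) * (-1)) by ring]
  exact h3

lemma drm_aux_solve_nonmem (μ A x : ℝ) (hμ : 0 < μ) (hx : 0 < x) :
    (A + μ * (-Real.log x - 1) = 0 ↔ x = Real.exp (A / μ - 1)) := by
  constructor
  · intro h
    have hlog : Real.log x = A / μ - 1 := by
      field_simp
      linear_combination -h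
    rw [← Real.exp_log hx, hlog]
  · intro h
    subst h
    rw [Real.log_exp]
    field_simp
    ring

lemma drm_aux_solve_mem (μ A Dr x : ℝ) (hμ : 0 < μ) (hx : 0 < x) (hxD : x < Dr) :
    (A + μ * (-Real.log x - 1) + μ * (Real.log (Dr - x) + 1) = 0 ↔
      x = Dr * (1 - 1 / (1 + Real.exp (A / μ)))) := by
  have hy : (0:ℝ) < Dr - x := by linarith
  have hE : (0:ℝ) < Real.exp (A / μ) := Real.exp_pos _
  have h1E : (0:ℝ) < 1 + Real.exp (A / μ) := by linarith
  have step1 : (A + μ * (-Real.log x - 1) + μ * (Real.log (Dr - x) + 1) = 0 ↔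
      Real.log x - Real.log (Dr - x) = A / μ) := by
    rw [eq_div_iff hμ.ne']
    constructor <;> intro h <;> linear_combination -h
  have step2 : (Real.log x - Real.log (Dr - x) = A / μ ↔
      x = (Dr - x) * Real.exp (A / μ)) := by
    constructor
    · intro h
      rw [← Real.log_div hx.ne' hy.ne'] at h
      have hxy : x / (Dr - x) = Real.exp (A / μ) := by
        rw [← Real.exp_log (div_pos hx hy), h]
      field_simp at hxy
      linarith [hxy]
    · intro h
      have : Real.log x = Real.log (Dr - x) + A / μ := by
        conv_lhs => rw [h]
        rw [Real.log_mul hy.ne' hE.ne', Real.log_exp]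
      linarith
  have step3 : (x = (Dr - x) * Real.exp (A / μ) ↔
      x = Dr * (1 - 1 / (1 + Real.exp (A / μ)))) := by
    constructor <;> intro h <;> field_simp at h ⊢ <;> linarith [h]
  exact step1.trans (step2.trans step3)

/-- stationary-point characterization underlying DRM. On the open convex
domain `Ω` (coordinates in `N` lie in `(0, D r)`, the others in `(0, ∞)`), the doubly
entropy-regularized Lagrangian
`O d = ∑ P r d r - μ ∑ d r ln (d r) - μ ∑_{r ∈ N} (D r - d r) ln (D r - d r) - ∑ c r d r`
is strictly concave and has at most one critical point; moreover a point `d ∈ Ω` is a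
critical point iff it equals the closed-form point
`d r = D r (1 - 1/(1 + e^{(P r - c r)/μ}))` for `r ∈ N`, `d r = e^{(P r - c r)/μ - 1}`
otherwise, and being a critical point is equivalent to being the unique global maximizer
of `O` on `Ω`. -/
theorem drm_stationary_point_characterization
    (R : Type*) [Fintype R] [Nonempty R] [DecidableEq R]
    (N : Finset R)
    (μ : ℝ) (hμ : 0 < μ)
    (P D c : R → ℝ) (hD : ∀ r ∈ N, 0 < D r)
    (Ω : Set (R → ℝ))
    (hΩ : Ω = {d : R → ℝ | (∀ r ∈ N, 0 < d r ∧ d r < D r) ∧ (∀ r ∉ N, 0 < d r)})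
    (O : (R → ℝ) → ℝ)
    (hO : ∀ d, O d = (∑ r, P r * d r) - μ * (∑ r, d r * Real.log (d r))
        - μ * (∑ r ∈ N, (D r - d r) * Real.log (D r - d r)) - ∑ r, c r * d r)
    (dform : R → ℝ)
    (hdform : ∀ r, dform r = if r ∈ N
        then D r * (1 - 1 / (1 + Real.exp ((P r - c r) / μ)))
        else Real.exp ((P r - c r) / μ - 1)) :
    StrictConcaveOn ℝ Ω O ∧
    (∀ d₁ ∈ Ω, ∀ d₂ ∈ Ω, fderiv ℝ O d₁ = 0 → fderiv ℝ O d₂ = 0 → d₁ = d₂) ∧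
    (∀ d ∈ Ω, (fderiv ℝ O d = 0 ↔ d = dform)) ∧
    (∀ d ∈ Ω, (fderiv ℝ O d = 0 ↔ (∀ d' ∈ Ω, d' ≠ d → O d' < O d))) := by
  classical
  set f : R → ℝ → ℝ := fun r x => (P r - c r) * x + μ * Real.negMulLog x +
      (if r ∈ N then μ * Real.negMulLog (D r - x) else 0) with hf
  set g : R → ℝ → ℝ := fun r x => (P r - c r) + μ * (-Real.log x - 1) +
      (if r ∈ N then μ * (Real.log (D r - x) + 1) else 0) with hg
  have hOfun : O = fun d => ∑ r, f r (d r) := by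
    funext d
    rw [hO, hf]
    have e1 : ∑ r, ((P r - c r) * d r + μ * Real.negMulLog (d r) +
        (if r ∈ N then μ * Real.negMulLog (D r - d r) else 0)) =
        (∑ r, (P r - c r) * d r) + (∑ r, μ * Real.negMulLog (d r)) +
        ∑ r, (if r ∈ N then μ * Real.negMulLog (D r - d r) else 0) := by
      rw [Finset.sum_add_distrib, Finset.sum_add_distrib]
    rw [e1, Finset.sum_ite_mem, Finset.univ_inter]
    have e2 : ∑ r, (P r - c r) * d r = (∑ r, P r * d r) - ∑ r, c r * d r := by
      rw [← Finset.sum_sub_distrib]; exact Finset.sum_congr rfl fun r _ => by ring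
    have e3 : ∑ r, μ * Real.negMulLog (d r) = -(μ * ∑ r, d r * Real.log (d r)) := by
      rw [Finset.mul_sum, ← Finset.sum_neg_distrib]
      exact Finset.sum_congr rfl fun r _ => by simp [Real.negMulLog]; try ring
    have e4 : ∑ r ∈ N, μ * Real.negMulLog (D r - d r) =
        -(μ * ∑ r ∈ N, (D r - d r) * Real.log (D r - d r)) := by
      rw [Finset.mul_sum, ← Finset.sum_neg_distrib]
      exact Finset.sum_congr rfl fun r _ => by simp [Real.negMulLog]; try ring
    rw [e2, e3, e4]; ring
  have hmem : ∀ d ∈ Ω, ∀ r, 0 < d r ∧ (r ∈ N → d r < D r) := by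
    intro d hd r
    rw [hΩ] at hd
    by_cases hr : r ∈ N
    · exact ⟨(hd.1 r hr).1, fun _ => (hd.1 r hr).2⟩
    · exact ⟨hd.2 r hr, fun h => absurd h hr⟩
  have hΩpi : Ω = Set.pi Set.univ (fun r => if r ∈ N then Set.Ioo 0 (D r) else Set.Ioi 0) := by
    rw [hΩ]; ext d
    simp only [Set.mem_setOf_eq, Set.mem_pi, Set.mem_univ, true_implies]
    constructor
    · rintro ⟨h1, h2⟩ r
      by_cases hr : r ∈ N
      · rw [if_pos hr]; exact h1 r hr
      · rw [if_neg hr]; exact h2 r hr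
    · intro h
      constructor
      · intro r hr; have := h r; rwa [if_pos hr] at this
      · intro r hr; have := h r; rwa [if_neg hr] at this
  have hconvex : Convex ℝ Ω := by
    rw [hΩpi]
    exact convex_pi fun r _ => by split_ifs; exacts [convex_Ioo _ _, convex_Ioi _]
  have hopen : IsOpen Ω := by
    rw [hΩpi]
    exact isOpen_set_pi Set.finite_univ fun r _ => by
      split_ifs; exacts [isOpen_Ioo, isOpen_Ioi]
  -- strict concavity
  have hconc : StrictConcaveOn ℝ Ω O := by
    rw [hOfun]
    refine ⟨hconvex, ?_⟩
    intro x hx y hy hxy a b ha hb hab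
    obtain ⟨r₀, hr₀⟩ : ∃ r, x r ≠ y r := by
      by_contra h; push_neg at h; exact hxy (funext h)
    have key : ∀ r : R, a • f r (x r) + b • f r (y r) ≤ f r (a * x r + b * y r) ∧
        (x r ≠ y r → a • f r (x r) + b • f r (y r) < f r (a * x r + b * y r)) := by
      intro r
      have hxr := hmem x hx r
      have hyr := hmem y hy r
      by_cases hr : r ∈ N
      · have hsc := drm_aux_concave_mem μ (P r - c r) (D r) hμ
        have hx' : x r ∈ Set.Icc (0:ℝ) (D r) := ⟨hxr.1.le, (hxr.2 hr).le⟩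
        have hy' : y r ∈ Set.Icc (0:ℝ) (D r) := ⟨hyr.1.le, (hyr.2 hr).le⟩
        have hfr : f r = fun z => (P r - c r) * z + μ * Real.negMulLog z +
            μ * Real.negMulLog (D r - z) := by
          funext z; simp [hf, if_pos hr]
        rw [hfr]
        constructor
        · simpa using hsc.concaveOn.2 hx' hy' ha.le hb.le hab
        · intro hne
          simpa using hsc.2 hx' hy' hne ha hb hab
      · have hsc := drm_aux_concave_nonmem μ (P r - c r) hμ
        have hx' : x r ∈ Set.Ici (0:ℝ) := hxr.1.le
        have hy' : y r ∈ Set.Ici (0:ℝ) := hyr.1.le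
        have hfr : f r = fun z => (P r - c r) * z + μ * Real.negMulLog z := by
          funext z; simp [hf, if_neg hr]
        rw [hfr]
        constructor
        · simpa using hsc.concaveOn.2 hx' hy' ha.le hb.le hab
        · intro hne
          simpa using hsc.2 hx' hy' hne ha hb hab
    calc a • (∑ r, f r (x r)) + b • (∑ r, f r (y r))
        = ∑ r, (a • f r (x r) + b • f r (y r)) := by
          rw [Finset.smul_sum, Finset.smul_sum, Finset.sum_add_distrib]
      _ < ∑ r, f r ((a • x + b • y) r) := by
          apply Finset.sum_lt_sum
          · intro r _
            simpa [smul_eq_mul] using (key r).1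
          · exact ⟨r₀, Finset.mem_univ _, by simpa [smul_eq_mul] using (key r₀).2 hr₀⟩
  -- derivative
  have hL : ∀ d ∈ Ω, HasFDerivAt O
      (∑ r, g r (d r) • (ContinuousLinearMap.proj r : (R → ℝ) →L[ℝ] ℝ)) d := by
    intro d hd
    rw [hOfun]
    apply HasFDerivAt.fun_sum
    intro r _
    have hd1 := (hmem d hd r).1
    have hproj : HasFDerivAt (fun d : R → ℝ => d r)
        (ContinuousLinearMap.proj r : (R → ℝ) →L[ℝ] ℝ) d :=
      (ContinuousLinearMap.proj r : (R → ℝ) →L[ℝ] ℝ).hasFDerivAt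
    by_cases hr : r ∈ N
    · have hder := drm_aux_deriv_mem μ (P r - c r) (D r) (d r) hd1 ((hmem d hd r).2 hr)
      have hcomp := hder.comp_hasFDerivAt d hproj
      have heq : g r (d r) = (P r - c r) + μ * (-Real.log (d r) - 1) +
          μ * (Real.log (D r - d r) + 1) := by simp [hg, if_pos hr]
      have hfr : (fun d : R → ℝ => f r (d r)) =
          (fun z => (P r - c r) * z + μ * Real.negMulLog z +
            μ * Real.negMulLog (D r - z)) ∘ (fun d : R → ℝ => d r) := by
        funext d'; simp [hf, if_pos hr, Function.comp]
      rw [hfr, heq]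
      exact hcomp
    · have hder := drm_aux_deriv_nonmem μ (P r - c r) (d r) hd1
      have hcomp := hder.comp_hasFDerivAt d hproj
      have heq : g r (d r) = (P r - c r) + μ * (-Real.log (d r) - 1) := by
        simp [hg, if_neg hr]
      have hfr : (fun d : R → ℝ => f r (d r)) =
          (fun z => (P r - c r) * z + μ * Real.negMulLog z) ∘ (fun d : R → ℝ => d r) := by
        funext d'; simp [hf, if_neg hr, Function.comp]
      rw [hfr, heq]
      exact hcomp
  have hfderiv : ∀ d ∈ Ω, fderiv ℝ O d =
      ∑ r, g r (d r) • (ContinuousLinearMap.proj r : (R → ℝ) →L[ℝ] ℝ) :=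
    fun d hd => (hL d hd).fderiv
  have hcrit : ∀ d ∈ Ω, (fderiv ℝ O d = 0 ↔ ∀ r, g r (d r) = 0) := by
    intro d hd
    rw [hfderiv d hd]
    constructor
    · intro h r
      have h2 := congrFun (congrArg DFunLike.coe h) (Pi.single r 1)
      simp only [ContinuousLinearMap.coe_sum', Finset.sum_apply,
        ContinuousLinearMap.coe_smul', Pi.smul_apply,
        ContinuousLinearMap.proj_apply, ContinuousLinearMap.zero_apply] at h2
      rw [Finset.sum_eq_single r] at h2
      · simpa using h2
      · intro s _ hs
        simp [Pi.single_apply, hs]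
      · intro h'; exact absurd (Finset.mem_univ r) h'
    · intro h
      ext v
      simp [h]
  have hsolve : ∀ d ∈ Ω, ((∀ r, g r (d r) = 0) ↔ d = dform) := by
    intro d hd
    constructor
    · intro h
      funext r
      have h1 := (hmem d hd r).1
      rw [hdform r]
      by_cases hr : r ∈ N
      · rw [if_pos hr]
        exact (drm_aux_solve_mem μ (P r - c r) (D r) (d r) hμ h1 ((hmem d hd r).2 hr)).1
          (by simpa [hg, if_pos hr] using h r)
      · rw [if_neg hr]
        exact (drm_aux_solve_nonmem μ (P r - c r) (d r) hμ h1).1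
          (by simpa [hg, if_neg hr] using h r)
    · intro h r
      have h1 := (hmem d hd r).1
      by_cases hr : r ∈ N
      · have h2 := (hmem d hd r).2 hr
        have hx : d r = D r * (1 - 1 / (1 + Real.exp ((P r - c r) / μ))) := by
          rw [h, hdform r, if_pos hr]
        have h3 := (drm_aux_solve_mem μ (P r - c r) (D r) (d r) hμ h1 h2).2 hx
        simpa [hg, if_pos hr] using h3
      · have hx : d r = Real.exp ((P r - c r) / μ - 1) := by
          rw [h, hdform r, if_neg hr]
        have h3 := (drm_aux_solve_nonmem μ (P r - c r) (d r) hμ h1).2 hx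
        simpa [hg, if_neg hr] using h3
  -- weak maximality
  have hweak : ∀ d ∈ Ω, fderiv ℝ O d = 0 → ∀ d' ∈ Ω, O d' ≤ O d := by
    intro d hd h0 d' hd'
    have hF : HasFDerivAt O (0 : (R → ℝ) →L[ℝ] ℝ) d := by
      have hLd := hL d hd
      rw [hfderiv d hd] at h0
      rwa [h0] at hLd
    set v := d' - d with hv
    have hmap : HasDerivAt (fun t : ℝ => d + t • v) v 0 := by
      simpa using ((hasDerivAt_id (0:ℝ)).smul_const v).const_add d
    have hF' : HasFDerivAt O (0 : (R → ℝ) →L[ℝ] ℝ) ((fun t : ℝ => d + t • v) 0) := by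
      simpa using hF
    have hline : HasDerivAt (fun t : ℝ => O (d + t • v)) 0 0 := by
      exact hF'.comp_hasDerivAt 0 hmap
    have hslope : ∀ t ∈ Set.Ioo (0:ℝ) 1,
        O d' - O d ≤ slope (fun t : ℝ => O (d + t • v)) 0 t := by
      intro t ht
      have heqpt : d + t • v = (1 - t) • d + t • d' := by
        rw [hv, smul_sub, sub_smul, one_smul]; abel
      have hOmid := hconc.concaveOn.2 hd hd' (by linarith [ht.2] : (0:ℝ) ≤ 1 - t)
        ht.1.le (by ring)
      rw [← heqpt] at hOmid
      simp only [smul_eq_mul] at hOmid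
      rw [slope_def_field]
      rw [le_div_iff₀ (by simpa using ht.1)]
      have h00 : (fun t : ℝ => O (d + t • v)) 0 = O d := by simp
      simp only [sub_zero]
      nlinarith [hOmid]
    have htend : Filter.Tendsto (slope (fun t : ℝ => O (d + t • v)) 0)
        (nhdsWithin 0 (Set.Ioi 0)) (nhds 0) :=
      (hasDerivAt_iff_tendsto_slope.mp hline).mono_left
        (nhdsWithin_mono 0 (fun t ht => Set.mem_compl_singleton_iff.mpr (ne_of_gt ht)))
    have hle : O d' - O d ≤ 0 := by
      refine ge_of_tendsto htend ?_
      filter_upwards [Ioo_mem_nhdsGT_of_mem (Set.mem_Ico.mpr ⟨le_refl (0:ℝ), one_pos⟩)]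
        with t ht
      exact hslope t ht
    linarith
  have hstrict : ∀ d ∈ Ω, fderiv ℝ O d = 0 → ∀ d' ∈ Ω, d' ≠ d → O d' < O d := by
    intro d hd h0 d' hd' hne
    have hm : (1/2 : ℝ) • d + (1/2 : ℝ) • d' ∈ Ω :=
      hconvex hd hd' (by norm_num) (by norm_num) (by norm_num)
    have h1 := hconc.2 hd hd' (Ne.symm hne) (by norm_num : (0:ℝ) < 1/2)
      (by norm_num : (0:ℝ) < 1/2) (by norm_num)
    have h2 := hweak d hd h0 _ hm
    simp only [smul_eq_mul] at h1
    linarith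
  have hmax_to_crit : ∀ d ∈ Ω, (∀ d' ∈ Ω, d' ≠ d → O d' < O d) → fderiv ℝ O d = 0 := by
    intro d hd hmax
    have hlm : IsLocalMax O d := by
      show ∀ᶠ d' in nhds d, O d' ≤ O d
      filter_upwards [hopen.mem_nhds hd] with d' hd'
      by_cases h : d' = d
      · rw [h]
      · exact (hmax d' hd' h).le
    exact hlm.fderiv_eq_zero
  refine ⟨hconc, ?_, ?_, ?_⟩
  · intro d₁ h₁ d₂ h₂ hf₁ hf₂
    by_contra hne
    have A := hstrict d₁ h₁ hf₁ d₂ h₂ (Ne.symm hne)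
    have B := hstrict d₂ h₂ hf₂ d₁ h₁ hne
    linarith
  · intro d hd
    exact (hcrit d hd).trans (hsolve d hd)
  · intro d hd
    exact ⟨fun h0 => hstrict d hd h0, fun hm => hmax_to_crit d hd hm⟩
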